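/- Let A be a symmetric positive definite n×n real matrix, β > 0, set C = (1/β) A and Λ = (1/√β) A, and let B be any n×n real matrix. Define S = C + B A⁻¹ Bᵀ and Ŝ = (B + Λ) A⁻¹ (B + Λ)ᵀ. Then Ŝ − S = (1/√β)(B + Bᵀ); consequently, if B + Bᵀ is positive semidefinite and Ŝ is invertible, then every eigenvalue of Ŝ⁻¹ S (over ℂ) is real and lies in [1/2, 1]. -/

import Mathlib

open Matrix ComplexOrder

lemma myPosDef_smul {n : ℕ} {M : Matrix (Fin n) (Fin n) ℝ} (hM : M.PosDef)
    {c : ℝ} (hc : 0 < c) : (c • M).PosDef := by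
  refine .of_dotProduct_mulVec_pos ?_ (fun x hx => ?_)
  · unfold Matrix.IsHermitian
    rw [conjTranspose_smul, hM.1]
    simp
  · rw [smul_mulVec, dotProduct_smul, smul_eq_mul]
    exact mul_pos hc (hM.dotProduct_mulVec_pos hx)

lemma myPosSemidef_smul {n : ℕ} {M : Matrix (Fin n) (Fin n) ℝ} (hM : M.PosSemidef)
    {c : ℝ} (hc : 0 ≤ c) : (c • M).PosSemidef := by
  refine .of_dotProduct_mulVec_nonneg ?_ (fun x => ?_)
  · unfold Matrix.IsHermitian
    rw [conjTranspose_smul, hM.1]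
    simp
  · rw [smul_mulVec, dotProduct_smul, smul_eq_mul]
    exact mul_nonneg hc (hM.dotProduct_mulVec_nonneg x)

open scoped MatrixOrder in
lemma myPosSemidef_map {n : ℕ} {M : Matrix (Fin n) (Fin n) ℝ} (hM : M.PosSemidef) :
    (M.map (algebraMap ℝ ℂ)).PosSemidef := by
  obtain ⟨B, rfl⟩ := CStarAlgebra.nonneg_iff_eq_star_mul_self.mp hM.nonneg
  rw [star_eq_conjTranspose, Matrix.map_mul,
    Matrix.conjTranspose_map (⇑(algebraMap ℝ ℂ)) (fun a => by simp [Complex.conj_ofReal])]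
  exact posSemidef_conjTranspose_mul_self _

lemma expand_key {n : ℕ} (A B : Matrix (Fin n) (Fin n) ℝ)
    (hAt : Aᵀ = A) (h1 : A * A⁻¹ = 1) (h2 : A⁻¹ * A = 1) (t : ℝ) :
    (B + t • A) * A⁻¹ * (B + t • A)ᵀ
      = B * A⁻¹ * Bᵀ + t • B + t • Bᵀ + (t * t) • A := by
  have e1 : B * A⁻¹ * A = B := by rw [Matrix.mul_assoc, h2, Matrix.mul_one]
  have e3 : A * A⁻¹ * Bᵀ = Bᵀ := by rw [h1, Matrix.one_mul]
  have e2 : A * A⁻¹ * A = A := by rw [h1, Matrix.one_mul]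
  rw [transpose_add, transpose_smul, hAt]
  simp only [Matrix.add_mul, Matrix.mul_add, Matrix.smul_mul, Matrix.mul_smul,
    smul_smul, smul_add, e1, e2, e3]
  abel

lemma spec_key {n : ℕ} (Sr H : Matrix (Fin n) (Fin n) ℝ)
    (h1 : (H - Sr).PosSemidef) (h2 : (Sr + Sr - H).PosSemidef)
    (hHd : H.PosDef) :
    ∀ z ∈ spectrum ℂ ((H⁻¹ * Sr).map (algebraMap ℝ ℂ)),
      z.im = 0 ∧ (1 / 2 : ℝ) ≤ z.re ∧ z.re ≤ 1 := by
  intro z hz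
  set f := algebraMap ℝ ℂ with hf
  set Hc := H.map f with hHc
  set Sc := Sr.map f with hSc
  have hdetH : IsUnit H.det := isUnit_iff_ne_zero.mpr hHd.det_pos.ne'
  rw [spectrum.mem_iff] at hz
  have hdet : ((algebraMap ℂ (Matrix (Fin n) (Fin n) ℂ)) z - (H⁻¹ * Sr).map f).det = 0 := by
    by_contra hne
    exact hz ((Matrix.isUnit_iff_isUnit_det _).mpr (isUnit_iff_ne_zero.mpr hne))
  obtain ⟨v, hv0, hv⟩ := (Matrix.exists_mulVec_eq_zero_iff).mpr hdet
  have hev : ((H⁻¹ * Sr).map f) *ᵥ v = z • v := by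
    rw [Algebra.algebraMap_eq_smul_one, sub_mulVec, smul_mulVec, one_mulVec] at hv
    exact (sub_eq_zero.mp hv).symm
  have hHS : Hc * ((H⁻¹ * Sr).map f) = Sc := by
    rw [hHc, hSc, ← Matrix.map_mul]
    rw [← Matrix.mul_assoc, Matrix.mul_nonsing_inv H hdetH, Matrix.one_mul]
  have hSv : Sc *ᵥ v = z • (Hc *ᵥ v) := by
    rw [← hHS, ← mulVec_mulVec, hev, mulVec_smul]
  set a := star v ⬝ᵥ (Sc *ᵥ v) with ha
  set b := star v ⬝ᵥ (Hc *ᵥ v) with hb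
  have hab : a = z * b := by rw [ha, hSv, dotProduct_smul, smul_eq_mul, hb]
  have hHcps : Hc.PosSemidef := myPosSemidef_map hHd.posSemidef
  have hbpos : 0 ≤ b := hHcps.dotProduct_mulVec_nonneg v
  have hbim : b.im = 0 := by
    have := (Complex.le_def.mp hbpos).2
    simpa using this.symm
  have hbre : 0 ≤ b.re := by simpa using (Complex.le_def.mp hbpos).1
  have hbne : b ≠ 0 := by
    intro h0
    have hv0' : Hc *ᵥ v = 0 := (hHcps.dotProduct_mulVec_zero_iff v).mp (by rw [← hb, h0])
    have hdetc : Hc.det ≠ 0 := by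
      have : Hc.det = f H.det := by
        rw [hHc, show H.map ⇑f = f.mapMatrix H from rfl, ← RingHom.map_det]
      rw [this]
      simp [hf, hHd.det_pos.ne']
    exact hdetc (Matrix.exists_mulVec_eq_zero_iff.mp ⟨v, hv0, hv0'⟩)
  have hbrpos : 0 < b.re := lt_of_le_of_ne hbre (by
    intro h; exact hbne (Complex.ext h.symm hbim))
  have hsub : (H - Sr).map f = Hc - Sc := by
    ext i j; simp [Matrix.map_apply, hf, hHc, hSc]
  have hsub2 : (Sr + Sr - H).map f = Sc + Sc - Hc := by
    ext i j; simp [Matrix.map_apply, hf, hHc, hSc]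
  have hd1 : 0 ≤ b - a := by
    have := (myPosSemidef_map h1).dotProduct_mulVec_nonneg v
    rwa [hsub, sub_mulVec, dotProduct_sub, ← ha, ← hb] at this
  have hd2 : 0 ≤ a + a - b := by
    have := (myPosSemidef_map h2).dotProduct_mulVec_nonneg v
    rwa [hsub2, sub_mulVec, add_mulVec, dotProduct_sub, dotProduct_add, ← ha, ← hb] at this
  have haim : a.im = z.im * b.re := by rw [hab]; simp [Complex.mul_im, hbim]
  have hare : a.re = z.re * b.re := by rw [hab]; simp [Complex.mul_re, hbim]
  have him1 : (b - a).im = 0 := by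
    have := (Complex.le_def.mp hd1).2
    simpa using this.symm
  have hre1 : 0 ≤ (b - a).re := by simpa using (Complex.le_def.mp hd1).1
  have hre2 : 0 ≤ (a + a - b).re := by simpa using (Complex.le_def.mp hd2).1
  have hzim : z.im = 0 := by
    have : a.im = 0 := by
      have := him1; simp [Complex.sub_im, hbim] at this; linarith
    rw [haim] at this
    exact (mul_eq_zero.mp this).resolve_right hbrpos.ne'
  refine ⟨hzim, ?_, ?_⟩
  · have : 0 ≤ a.re + a.re - b.re := by simpa [Complex.sub_re, Complex.add_re] using hre2
    rw [hare] at this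
    nlinarith
  · have : 0 ≤ b.re - a.re := by simpa [Complex.sub_re] using hre1
    rw [hare] at this
    nlinarith

/-- For `C = (1/β) A` and `Lam = (1/√β) A` with `A` symmetric positive
definite and `β > 0`, one has `Shat - S = (1/√β)(B + Bᵀ)`; consequently,
if `B + Bᵀ` is positive semidefinite and `Shat` is invertible, then every
eigenvalue of `Shat⁻¹ S` (over `ℂ`) is real and lies in `[1/2, 1]`. -/
theorem matching_strategy_beta_scaled (n : ℕ)
    (A : Matrix (Fin n) (Fin n) ℝ) (hA : A.PosDef)
    (β : ℝ) (hβ : 0 < β)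
    (C Lam B : Matrix (Fin n) (Fin n) ℝ)
    (hC : C = β⁻¹ • A) (hLam : Lam = (Real.sqrt β)⁻¹ • A)
    (S Shat : Matrix (Fin n) (Fin n) ℝ)
    (hS : S = C + B * A⁻¹ * Bᵀ)
    (hShat : Shat = (B + Lam) * A⁻¹ * (B + Lam)ᵀ) :
    Shat - S = (Real.sqrt β)⁻¹ • (B + Bᵀ) ∧
      ((B + Bᵀ).PosSemidef → IsUnit Shat →
        ∀ z ∈ spectrum ℂ ((Shat⁻¹ * S).map (algebraMap ℝ ℂ)),
          z.im = 0 ∧ (1 / 2 : ℝ) ≤ z.re ∧ z.re ≤ 1) := by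
  set s := Real.sqrt β with hsdef
  have hs : 0 < s := Real.sqrt_pos.mpr hβ
  have hss : s * s = β := Real.mul_self_sqrt hβ.le
  have hAt : Aᵀ = A := by
    rw [← Matrix.conjTranspose_eq_transpose_of_trivial]; exact hA.1
  have hAdet : IsUnit A.det := isUnit_iff_ne_zero.mpr hA.det_pos.ne'
  have hinv1 : A * A⁻¹ = 1 := Matrix.mul_nonsing_inv _ hAdet
  have hinv2 : A⁻¹ * A = 1 := Matrix.nonsing_inv_mul _ hAdet
  have hsinv : s⁻¹ * s⁻¹ = β⁻¹ := by rw [← mul_inv, hss]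
  have part1 : Shat - S = s⁻¹ • (B + Bᵀ) := by
    rw [hShat, hLam, expand_key A B hAt hinv1 hinv2, hS, hC, hsinv, smul_add]
    abel
  refine ⟨part1, fun hBpsd hShatU z hz => ?_⟩
  have hBAB : (B * A⁻¹ * Bᵀ).PosSemidef := by
    have := hA.inv.posSemidef.mul_mul_conjTranspose_same B
    rwa [Matrix.conjTranspose_eq_transpose_of_trivial] at this
  have hSpd : S.PosDef := by
    rw [hS, hC]
    exact (myPosDef_smul hA (by positivity)).add_posSemidef hBAB
  have hShat2 : Shat = S + s⁻¹ • (B + Bᵀ) := by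
    rw [← part1]; abel
  have hShatpd : Shat.PosDef := by
    rw [hShat2]
    exact hSpd.add_posSemidef (myPosSemidef_smul hBpsd (by positivity))
  have h1 : (Shat - S).PosSemidef := by
    rw [part1]; exact myPosSemidef_smul hBpsd (by positivity)
  have h2 : (S + S - Shat).PosSemidef := by
    have key2 : S + S - Shat = (B + (-s⁻¹) • A) * A⁻¹ * (B + (-s⁻¹) • A)ᵀ := by
      rw [expand_key A B hAt hinv1 hinv2 (-s⁻¹), hShat2, hS, hC,
        show (-s⁻¹) * (-s⁻¹) = β⁻¹ by rw [neg_mul_neg, hsinv]]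
      simp only [neg_smul, smul_add]
      abel
    rw [key2]
    have := hA.inv.posSemidef.mul_mul_conjTranspose_same (B + (-s⁻¹) • A)
    rwa [Matrix.conjTranspose_eq_transpose_of_trivial] at this
  exact spec_key S Shat h1 h2 hShatpd z hz
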